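/- Supermartingale (Robbins–Siegmund type) lemma for the diminishing step-size analysis: on a filtered probability space let (a_t) and (b_t) be nonnegative adapted real-valued processes and c ≥ 0 a constant, with step-sizes η_t ≥ 0 satisfying Σ_t η_t² < ∞. If E[a_{t+1} | F_t] ≤ a_t − b_t + c η_t² almost surely for every t, then a_t converges almost surely to a finite limit and Σ_t b_t < ∞ almost surely; if in addition b_t = 2η_t r_t with r_t ≥ 0 and Σ_t η_t = ∞, then liminf_{t→∞} r_t = 0 almost surely. -/

import Mathlib

open MeasureTheory Filter

/-- **Supermartingale (Robbins–Siegmund type) lemma for the diminishing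
step-size analysis.** If `(a_t)` and `(b_t)` are nonnegative adapted processes,
`c ≥ 0`, `η_t ≥ 0` with `Σ η_t² < ∞`, and
`E[a_{t+1} | F_t] ≤ a_t − b_t + c η_t²` a.s. for every `t`, then `a_t` converges
a.s. to a finite limit and `Σ_t b_t < ∞` a.s.; if in addition `b_t = 2η_t r_t`
with `r_t ≥ 0` and `Σ_t η_t = ∞`, then `liminf_{t→∞} r_t = 0` a.s. -/
theorem robbins_siegmund_polk
    {Ω : Type*} {m0 : MeasurableSpace Ω} (P : Measure Ω) [IsProbabilityMeasure P]
    (ℱ : Filtration ℕ m0)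
    (a b : ℕ → Ω → ℝ)
    (ha_nonneg : ∀ t ω, 0 ≤ a t ω) (hb_nonneg : ∀ t ω, 0 ≤ b t ω)
    (ha_adapted : Adapted ℱ a) (hb_adapted : Adapted ℱ b)
    (ha_int : ∀ t, Integrable (a t) P) (hb_int : ∀ t, Integrable (b t) P)
    (c : ℝ) (hc : 0 ≤ c)
    (η : ℕ → ℝ) (hη_nonneg : ∀ t, 0 ≤ η t) (hηsq : Summable fun t => η t ^ 2)
    (hdescent : ∀ t, ∀ᵐ ω ∂P,
      (P[a (t + 1) | ℱ t]) ω ≤ a t ω - b t ω + c * η t ^ 2) :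
    (∀ᵐ ω ∂P, (∃ l : ℝ, Tendsto (fun t => a t ω) atTop (nhds l)) ∧
      Summable fun t => b t ω) ∧
    (∀ r : ℕ → Ω → ℝ, (∀ t ω, 0 ≤ r t ω) → (∀ t ω, b t ω = 2 * η t * r t ω) →
      ¬ Summable η →
      ∀ᵐ ω ∂P, Filter.liminf (fun t => r t ω) atTop = 0) := by
  classical
  set K : ℝ := ∑' t, η t ^ 2 with hK
  have hK0 : 0 ≤ K := tsum_nonneg fun t => sq_nonneg _
  have hpart : ∀ t, ∑ s ∈ Finset.range t, η s ^ 2 ≤ K := fun t =>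
    Summable.sum_le_tsum _ (fun i _ => sq_nonneg _) hηsq
  -- the supermartingale
  set X : ℕ → Ω → ℝ := fun t ω => a t ω +
      (∑ s ∈ Finset.range t, b s ω - c * ∑ s ∈ Finset.range t, η s ^ 2) with hXdef
  -- measurability of the partial sums of b
  have hSb_meas : ∀ t n, n ≤ t + 1 →
      StronglyMeasurable[ℱ t] (fun ω => ∑ s ∈ Finset.range n, b s ω) := by
    intro t n hn
    refine Measurable.stronglyMeasurable (Finset.measurable_sum (Finset.range n) fun s hs => ?_)
    have hs' : s ≤ t := by
      have := Finset.mem_range.1 hs; omega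
    exact (hb_adapted s).mono (ℱ.mono hs') le_rfl
  have hg_meas : ∀ t n, n ≤ t + 1 → StronglyMeasurable[ℱ t]
      (fun ω => ∑ s ∈ Finset.range n, b s ω - c * ∑ s ∈ Finset.range n, η s ^ 2) :=
    fun t n hn => (hSb_meas t n hn).sub stronglyMeasurable_const
  have hg_int : ∀ n, Integrable
      (fun ω => ∑ s ∈ Finset.range n, b s ω - c * ∑ s ∈ Finset.range n, η s ^ 2) P := by
    intro n
    exact (integrable_finset_sum _ fun s _ => hb_int s).sub (integrable_const _)
  have hX_adapted : Adapted ℱ X := fun t =>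
    (ha_adapted t).add (hg_meas t t (by omega)).measurable
  have hX_int : ∀ t, Integrable (X t) P := fun t => (ha_int t).add (hg_int t)
  have hX_super : Supermartingale X ℱ P := by
    refine supermartingale_nat (fun t => (hX_adapted t).stronglyMeasurable) hX_int fun t => ?_
    have hadd : (P[X (t + 1)|ℱ t]) =ᵐ[P]
        (P[a (t + 1)|ℱ t]) + (P[(fun ω => ∑ s ∈ Finset.range (t + 1), b s ω -
          c * ∑ s ∈ Finset.range (t + 1), η s ^ 2)|ℱ t]) :=
      condExp_add (ha_int (t + 1)) (hg_int (t + 1)) _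
    have hpull : (P[(fun ω => ∑ s ∈ Finset.range (t + 1), b s ω -
          c * ∑ s ∈ Finset.range (t + 1), η s ^ 2)|ℱ t]) =
        (fun ω => ∑ s ∈ Finset.range (t + 1), b s ω -
          c * ∑ s ∈ Finset.range (t + 1), η s ^ 2) :=
      condExp_of_stronglyMeasurable (ℱ.le t) (hg_meas t (t + 1) le_rfl) (hg_int (t + 1))
    filter_upwards [hadd, hdescent t] with ω h1 h2
    rw [h1, Pi.add_apply, hpull]
    have hb' : ∑ s ∈ Finset.range (t + 1), b s ω =
        ∑ s ∈ Finset.range t, b s ω + b t ω := Finset.sum_range_succ _ _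
    have hη' : ∑ s ∈ Finset.range (t + 1), η s ^ 2 =
        ∑ s ∈ Finset.range t, η s ^ 2 + η t ^ 2 := Finset.sum_range_succ _ _
    simp only [hXdef, hb', hη']
    nlinarith [h2]
  -- L¹ bound
  have hX_lb : ∀ t ω, -(c * K) ≤ X t ω := by
    intro t ω
    have h1 : 0 ≤ a t ω + ∑ s ∈ Finset.range t, b s ω :=
      add_nonneg (ha_nonneg t ω) (Finset.sum_nonneg fun s _ => hb_nonneg s ω)
    have h2 : c * ∑ s ∈ Finset.range t, η s ^ 2 ≤ c * K :=
      mul_le_mul_of_nonneg_left (hpart t) hc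
    simp only [hXdef]; linarith
  have hX_mean : ∀ t, ∫ ω, X t ω ∂P ≤ ∫ ω, X 0 ω ∂P := by
    intro t
    have := hX_super.setIntegral_le (Nat.zero_le t) (MeasurableSet.univ (α := Ω))
    simpa [Measure.restrict_univ] using this
  have hX0 : ∫ ω, X 0 ω ∂P = ∫ ω, a 0 ω ∂P := by
    simp [hXdef]
  set M : ℝ := ∫ ω, a 0 ω ∂P + 2 * (c * K) with hM
  have habs : ∀ t, ∫ ω, |X t ω| ∂P ≤ M := by
    intro t
    have hint : Integrable (fun ω => |X t ω|) P := (hX_int t).abs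
    have hle : ∀ ω, |X t ω| ≤ X t ω + 2 * (c * K) := by
      intro ω
      have := hX_lb t ω
      rcases abs_cases (X t ω) with ⟨h, _⟩ | ⟨h, _⟩ <;> nlinarith [mul_nonneg hc hK0]
    calc ∫ ω, |X t ω| ∂P ≤ ∫ ω, (X t ω + 2 * (c * K)) ∂P :=
          integral_mono hint ((hX_int t).add (integrable_const _)) hle
      _ = ∫ ω, X t ω ∂P + 2 * (c * K) := by
          rw [integral_add (hX_int t) (integrable_const _)]; simp
      _ ≤ M := by rw [hM, ← hX0]; linarith [hX_mean t]
  have hbdd : ∀ t, eLpNorm (X t) 1 P ≤ ENNReal.ofReal M := by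
    intro t
    rw [eLpNorm_one_eq_lintegral_enorm,
      ← ofReal_integral_norm_eq_lintegral_enorm (hX_int t)]
    exact ENNReal.ofReal_le_ofReal (by simpa [Real.norm_eq_abs] using habs t)
  -- almost sure convergence of X
  have hX_conv : ∀ᵐ ω ∂P, ∃ l : ℝ, Tendsto (fun t => X t ω) atTop (nhds l) := by
    have hsub : Submartingale (-X) ℱ P := hX_super.neg
    have hbdd' : ∀ t, eLpNorm ((-X) t) 1 P ≤ (M.toNNReal : ENNReal) := by
      intro t
      have : eLpNorm ((-X) t) 1 P = eLpNorm (X t) 1 P := by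
        simp [eLpNorm_neg]
      rw [this]
      simpa [ENNReal.ofReal] using hbdd t
    filter_upwards [hsub.exists_ae_tendsto_of_bdd hbdd'] with ω ⟨l, hl⟩
    exact ⟨-l, by simpa using hl.neg⟩
  -- part 1
  have part1 : ∀ᵐ ω ∂P, (∃ l : ℝ, Tendsto (fun t => a t ω) atTop (nhds l)) ∧
      Summable fun t => b t ω := by
    filter_upwards [hX_conv] with ω ⟨l, hl⟩
    -- a + partial sums of b converges
    have hηt : Tendsto (fun t => ∑ s ∈ Finset.range t, η s ^ 2) atTop (nhds K) :=
      hηsq.hasSum.tendsto_sum_nat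
    have hh : Tendsto (fun t => a t ω + ∑ s ∈ Finset.range t, b s ω) atTop
        (nhds (l + c * K)) := by
      have : (fun t => a t ω + ∑ s ∈ Finset.range t, b s ω) =
          fun t => X t ω + c * ∑ s ∈ Finset.range t, η s ^ 2 := by
        funext t; simp only [hXdef]; ring
      rw [this]
      exact hl.add ((hηt.const_mul c))
    have hbdd2 : BddAbove (Set.range fun t => a t ω + ∑ s ∈ Finset.range t, b s ω) :=
      hh.bddAbove_range
    obtain ⟨C, hC⟩ := hbdd2
    have hsumb : Summable fun t => b t ω := by
      refine summable_of_sum_range_le (c := C) (fun t => hb_nonneg t ω) fun n => ?_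
      have h1 : a n ω + ∑ s ∈ Finset.range n, b s ω ≤ C :=
        hC ⟨n, rfl⟩
      linarith [ha_nonneg n ω]
    refine ⟨⟨l + c * K - ∑' t, b t ω, ?_⟩, hsumb⟩
    have hSb : Tendsto (fun t => ∑ s ∈ Finset.range t, b s ω) atTop
        (nhds (∑' t, b t ω)) := hsumb.hasSum.tendsto_sum_nat
    have := hh.sub hSb
    simpa using this
  refine ⟨part1, ?_⟩
  -- part 2
  intro r hr_nonneg hbr hηdiv
  filter_upwards [part1] with ω hω
  have hsumb : Summable fun t => b t ω := hω.2
  -- for any ε > 0, frequently r t ω < ε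
  have hfreq : ∀ ε : ℝ, 0 < ε → ∃ᶠ t in atTop, r t ω < ε := by
    intro ε hε
    by_contra h
    rw [Filter.not_frequently] at h
    simp only [not_lt] at h
    obtain ⟨T, hT⟩ := eventually_atTop.1 h
    apply hηdiv
    rw [← summable_nat_add_iff T]
    refine Summable.of_nonneg_of_le (fun t => hη_nonneg _)
      (fun t => ?_) (((summable_nat_add_iff T).2 hsumb).mul_left (2 * ε)⁻¹)
    have h1 : ε ≤ r (t + T) ω := hT (t + T) (by omega)
    have h2 : b (t + T) ω = 2 * η (t + T) * r (t + T) ω := hbr _ _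
    have h3 : 0 ≤ η (t + T) := hη_nonneg _
    rw [h2]
    rw [← sub_nonneg]
    have : (2 * ε)⁻¹ * (2 * η (t + T) * r (t + T) ω) - η (t + T)
        = (2 * ε)⁻¹ * (2 * η (t + T)) * (r (t + T) ω - ε) := by
      field_simp
    rw [this]
    exact mul_nonneg (by positivity) (sub_nonneg.2 h1)
  -- liminf = 0
  have hlb : atTop.IsBoundedUnder (· ≥ ·) (fun t => r t ω) :=
    ⟨0, Filter.eventually_map.2 (Filter.Eventually.of_forall fun t => hr_nonneg t ω)⟩
  have hcb : atTop.IsCoboundedUnder (· ≥ ·) (fun t => r t ω) := by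
    refine ⟨1, fun x hx => ?_⟩
    have hx' : ∀ᶠ t in atTop, x ≤ r t ω := Filter.eventually_map.1 hx
    obtain ⟨t, ht1, ht2⟩ := (hx'.and_frequently (hfreq 1 one_pos)).exists
    linarith
  refine le_antisymm (le_of_forall_pos_le_add fun ε hε => ?_) (le_liminf_of_le hcb
    (Filter.Eventually.of_forall fun t => hr_nonneg t ω))
  have := liminf_le_of_frequently_le ((hfreq ε hε).mono fun t ht => ht.le) hlb
  linarith
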